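/- Let f : [0, τ] → ℝ² be a continuous piecewise-linear map whose periodic extension f^∞ (defined by f^∞(kτ + r) = k(f(τ) − f(0)) + f(r)) is injective; assume f(0) = (0,0), f₂(τ) = 0, f₁(τ) > 0, and min over t ∈ ℝ of f^∞₂(t) equals 0, where f^∞ = (f^∞₁, f^∞₂). Then for all t₁ < t₂ in ℝ with f^∞₂(t₁) = f^∞₂(t₂) = 0 one has f^∞₁(t₁) < f^∞₁(t₂). -/

import Mathlib

open Classical

noncomputable section Stmt14Aux

/-- sheared first coordinate -/
def xi (δ : ℝ) (p : ℝ × ℝ) : ℝ := p.1 + δ * p.2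

/-- determinant of two plane vectors -/
def dt (u v : ℝ × ℝ) : ℝ := u.1 * v.2 - u.2 * v.1

/-- the downward (sheared-vertical) ray from `p` crosses the segment `[P,Q]`,
with the half-open convention in the sheared abscissa. -/
def cross (δ : ℝ) (p P Q : ℝ × ℝ) : Prop :=
  (xi δ P ≤ xi δ p ∧ xi δ p < xi δ Q ∧ 0 < dt (Q - P) (p - P)) ∨
  (xi δ Q ≤ xi δ p ∧ xi δ p < xi δ P ∧ dt (Q - P) (p - P) < 0)

noncomputable def cI (δ : ℝ) (p P Q : ℝ × ℝ) : ZMod 2 := if cross δ p P Q then 1 else 0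

noncomputable def gI (δ : ℝ) (p v : ℝ × ℝ) : ZMod 2 :=
  if xi δ v = xi δ p ∧ v.2 < p.2 then 1 else 0

lemma zmod2_add_self (x : ZMod 2) : x + x = 0 := by
  fin_cases x <;> decide

lemma dt_eq_xi (δ : ℝ) (u v : ℝ × ℝ) : dt u v = xi δ u * v.2 - xi δ v * u.2 := by
  simp only [dt, xi]; ring

lemma dt_add_right (u v w : ℝ × ℝ) : dt u (v + w) = dt u v + dt u w := by
  simp only [dt, Prod.fst_add, Prod.snd_add]; ring

lemma dt_smul_self (u : ℝ × ℝ) (a : ℝ) : dt u (a • u) = 0 := by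
  simp only [dt, Prod.smul_fst, Prod.smul_snd, smul_eq_mul]; ring

lemma xi_lip (δ : ℝ) (p q : ℝ × ℝ) : |xi δ q - xi δ p| ≤ (1 + |δ|) * dist q p := by
  have h1 : dist q.1 p.1 ≤ dist q p := by
    rw [Prod.dist_eq]; exact le_max_left _ _
  have h2 : dist q.2 p.2 ≤ dist q p := by
    rw [Prod.dist_eq]; exact le_max_right _ _
  rw [Real.dist_eq] at h1 h2
  have : xi δ q - xi δ p = (q.1 - p.1) + δ * (q.2 - p.2) := by simp [xi]; ring
  rw [this]
  have hd : (0:ℝ) ≤ dist q p := dist_nonneg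
  calc |(q.1 - p.1) + δ * (q.2 - p.2)| ≤ |q.1 - p.1| + |δ * (q.2 - p.2)| := abs_add_le _ _
    _ = |q.1 - p.1| + |δ| * |q.2 - p.2| := by rw [abs_mul]
    _ ≤ dist q p + |δ| * dist q p := by gcongr
    _ = (1 + |δ|) * dist q p := by ring

lemma dt_lip (u p q : ℝ × ℝ) :
    |dt u (q - p)| ≤ (|u.1| + |u.2|) * dist q p := by
  have h1 : |q.1 - p.1| ≤ dist q p := by
    rw [Prod.dist_eq, ← Real.dist_eq]; exact le_max_left _ _
  have h2 : |q.2 - p.2| ≤ dist q p := by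
    rw [Prod.dist_eq, ← Real.dist_eq]; exact le_max_right _ _
  have : dt u (q - p) = u.1 * (q.2 - p.2) - u.2 * (q.1 - p.1) := by
    simp [dt]
  rw [this]
  calc |u.1 * (q.2 - p.2) - u.2 * (q.1 - p.1)|
      ≤ |u.1 * (q.2 - p.2)| + |u.2 * (q.1 - p.1)| := abs_sub _ _
    _ = |u.1| * |q.2 - p.2| + |u.2| * |q.1 - p.1| := by rw [abs_mul, abs_mul]
    _ ≤ |u.1| * dist q p + |u.2| * dist q p := by gcongr
    _ = (|u.1| + |u.2|) * dist q p := by ring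


-- the point on the line PQ with the same sheared abscissa as p
lemma zpoint (δ : ℝ) (p P Q : ℝ × ℝ) (hab : xi δ P < xi δ Q)
    (h1 : xi δ P ≤ xi δ p) (h2 : xi δ p < xi δ Q) :
    ∃ z ∈ segment ℝ P Q, xi δ z = xi δ p ∧
      dt (Q - P) (p - P) = (xi δ Q - xi δ P) * (p.2 - z.2) := by
  set a := xi δ P with ha
  set b := xi δ Q with hb
  have hba : 0 < b - a := by linarith
  set lam := (xi δ p - a) / (b - a) with hlam
  have hlam0 : 0 ≤ lam := by
    apply div_nonneg; linarith; linarith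
  have hlam1 : lam ≤ 1 := by
    rw [div_le_one hba]; linarith
  refine ⟨P + lam • (Q - P), ?_, ?_, ?_⟩
  · rw [segment_eq_image']
    exact ⟨lam, ⟨hlam0, hlam1⟩, rfl⟩
  · have : xi δ (P + lam • (Q - P)) = a + lam * (b - a) := by
      simp only [xi, Prod.fst_add, Prod.snd_add, Prod.smul_fst, Prod.smul_snd,
        Prod.fst_sub, Prod.snd_sub, smul_eq_mul, ha, hb]
      ring
    rw [this, hlam]
    field_simp
    ring
  · have hz2 : (P + lam • (Q - P)).2 = P.2 + lam * (Q.2 - P.2) := by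
      simp [Prod.snd_add, Prod.smul_snd, smul_eq_mul]
    rw [hz2]
    have hd : dt (Q - P) (p - P) = (b - a) * (p - P).2 - (xi δ (p - P)) * (Q - P).2 := by
      have := dt_eq_xi δ (Q - P) (p - P)
      have hxiQP : xi δ (Q - P) = b - a := by
        simp only [xi, Prod.fst_sub, Prod.snd_sub, ha, hb]; ring
      rw [this, hxiQP]
    have hxip : xi δ (p - P) = xi δ p - a := by
      simp only [xi, Prod.fst_sub, Prod.snd_sub, ha]; ring
    rw [hd, hxip]
    have h1 : (p - P).2 = p.2 - P.2 := rfl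
    have h2 : (Q - P).2 = Q.2 - P.2 := rfl
    rw [h1, h2, hlam]
    field_simp
    ring

lemma cross_swap (δ : ℝ) (p P Q : ℝ × ℝ) : cross δ p P Q ↔ cross δ p Q P := by
  have hdt : dt (P - Q) (p - Q) = -dt (Q - P) (p - P) := by
    simp only [dt, Prod.fst_sub, Prod.snd_sub]; ring
  constructor
  · rintro (⟨h1, h2, h3⟩ | ⟨h1, h2, h3⟩)
    · exact Or.inr ⟨h1, h2, by rw [hdt]; linarith⟩
    · exact Or.inl ⟨h1, h2, by rw [hdt]; linarith⟩
  · rintro (⟨h1, h2, h3⟩ | ⟨h1, h2, h3⟩)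
    · exact Or.inr ⟨h1, h2, by rw [hdt] at h3; linarith⟩
    · exact Or.inl ⟨h1, h2, by rw [hdt] at h3; linarith⟩

/-- if the ray from `p` crosses `[P,Q]` then some point of the segment lies strictly
below `p` (same sheared abscissa). -/
lemma crossBelow {δ : ℝ} {p P Q : ℝ × ℝ} (h : cross δ p P Q) :
    ∃ z ∈ segment ℝ P Q, z.2 < p.2 ∧ xi δ z = xi δ p := by
  rcases h with ⟨h1, h2, h3⟩ | ⟨h1, h2, h3⟩
  · have hab : xi δ P < xi δ Q := lt_of_le_of_lt h1 h2
    obtain ⟨z, hz, hxi, hdt⟩ := zpoint δ p P Q hab h1 h2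
    refine ⟨z, hz, ?_, hxi⟩
    nlinarith [hdt]
  · have hab : xi δ Q < xi δ P := lt_of_le_of_lt h1 h2
    obtain ⟨z, hz, hxi, hdt⟩ := zpoint δ p Q P hab h1 h2
    have hd2 : dt (P - Q) (p - Q) = -dt (Q - P) (p - P) := by
      simp only [dt, Prod.fst_sub, Prod.snd_sub]; ring
    rw [hd2] at hdt
    refine ⟨z, segment_symm ℝ Q P ▸ hz, ?_, hxi⟩
    nlinarith [hdt]

/-- if `p` is on the line (det = 0) with abscissa in the span, it is on the segment. -/
lemma onSegment (δ : ℝ) (p P Q : ℝ × ℝ) (hab : xi δ P < xi δ Q)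
    (h1 : xi δ P ≤ xi δ p) (h2 : xi δ p < xi δ Q)
    (h3 : dt (Q - P) (p - P) = 0) : p ∈ segment ℝ P Q := by
  obtain ⟨z, hz, hxi, hdt⟩ := zpoint δ p P Q hab h1 h2
  have hy : p.2 = z.2 := by
    have : (xi δ Q - xi δ P) * (p.2 - z.2) = 0 := by rw [← hdt, h3]
    rcases mul_eq_zero.1 this with h | h
    · exfalso; linarith
    · linarith
  have hx : p.1 = z.1 := by
    have h1 : p.1 + δ * p.2 = z.1 + δ * z.2 := hxi.symm
    rw [hy] at h1; linarith
  have : p = z := Prod.ext hx hy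
  rw [this]; exact hz

/-- far points (abscissa beyond both endpoints) are not crossed. -/
lemma notCross_far {δ : ℝ} {p P Q : ℝ × ℝ} (h1 : xi δ P ≤ xi δ p) (h2 : xi δ Q ≤ xi δ p) :
    ¬ cross δ p P Q := by
  rintro (⟨_, hb, _⟩ | ⟨_, hb, _⟩) <;> linarith


section Jump
variable {δ : ℝ} {p P Q : ℝ × ℝ}

lemma crossIff (hab : xi δ P < xi δ Q) (q : ℝ × ℝ) :
    cross δ q P Q ↔ (xi δ P ≤ xi δ q ∧ xi δ q < xi δ Q ∧ 0 < dt (Q - P) (q - P)) := by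
  constructor
  · rintro (h | ⟨h1, h2, _⟩)
    · exact h
    · exfalso; linarith
  · exact Or.inl

lemma dt_decomp (q : ℝ × ℝ) :
    dt (Q - P) (q - P) = dt (Q - P) (p - P) + dt (Q - P) (q - p) := by
  simp only [dt, Prod.fst_sub, Prod.snd_sub]; ring

/-- main jump lemma, case `xi P < xi Q`. -/
lemma cI_jump_lt (hab : xi δ P < xi δ Q) (hseg : p ∉ segment ℝ P Q) :
    ∃ ε > 0, ∀ q, dist q p < ε →
      cI δ q P Q = cI δ p P Q + (if xi δ q < xi δ p then gI δ p P + gI δ p Q else 0) := by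
  have hKx : (0:ℝ) < 1 + |δ| := by positivity
  have hKD : (0:ℝ) < |(Q - P).1| + |(Q - P).2| + 1 := by positivity
  have hxiq : ∀ (margin : ℝ) (q : ℝ × ℝ), dist q p < margin / (1 + |δ|) →
      |xi δ q - xi δ p| < margin := by
    intro margin q hq
    have h1 := xi_lip δ p q
    have h2 : (1 + |δ|) * dist q p < (1 + |δ|) * (margin / (1 + |δ|)) :=
      mul_lt_mul_of_pos_left hq hKx
    rw [mul_div_cancel₀ _ (ne_of_gt hKx)] at h2
    exact lt_of_le_of_lt h1 h2
  have hDq : ∀ (q : ℝ × ℝ),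
      dist q p < |dt (Q - P) (p - P)| / (|(Q - P).1| + |(Q - P).2| + 1) →
      (0 < dt (Q - P) (p - P) → 0 < dt (Q - P) (q - P)) ∧
      (dt (Q - P) (p - P) < 0 → dt (Q - P) (q - P) < 0) := by
    intro q hq
    have h1 := dt_lip (Q - P) p q
    have h2 : (|(Q - P).1| + |(Q - P).2|) * dist q p
        ≤ (|(Q - P).1| + |(Q - P).2| + 1) * dist q p := by
      have : (0:ℝ) ≤ dist q p := dist_nonneg
      nlinarith
    have h3 := mul_lt_mul_of_pos_left hq hKD
    rw [mul_div_cancel₀ _ (ne_of_gt hKD)] at h3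
    have h4 : |dt (Q - P) (q - p)| < |dt (Q - P) (p - P)| := by linarith
    have h5 := dt_decomp (P := P) (Q := Q) (p := p) q
    constructor
    · intro hpos
      rw [abs_of_pos hpos] at h4
      have := abs_lt.1 h4
      linarith [h5, this.1]
    · intro hneg
      rw [abs_of_neg hneg] at h4
      have := abs_lt.1 h4
      linarith [h5, this.2]
  have hgQb : xi δ Q ≠ xi δ p → gI δ p Q = 0 := by
    intro h; rw [gI, if_neg]; rintro ⟨h1, _⟩; exact h h1
  have hgPa : xi δ P ≠ xi δ p → gI δ p P = 0 := by
    intro h; rw [gI, if_neg]; rintro ⟨h1, _⟩; exact h h1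
  rcases lt_trichotomy (xi δ p) (xi δ P) with hxa | hxa | hxa
  · -- Case A : x < a
    refine ⟨(xi δ P - xi δ p) / (1 + |δ|), div_pos (by linarith) hKx, ?_⟩
    intro q hq
    have h1 : xi δ q < xi δ P := by
      have := abs_lt.1 (hxiq (xi δ P - xi δ p) q hq); linarith
    have hcq : ¬ cross δ q P Q := by
      rw [crossIff hab]; rintro ⟨h, _, _⟩; linarith
    have hcp : ¬ cross δ p P Q := by
      rw [crossIff hab]; rintro ⟨h, _, _⟩; linarith
    have hgP := hgPa (by intro h; rw [h] at hxa; exact lt_irrefl _ hxa)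
    have hgQ := hgQb (by intro h; rw [h] at hab; linarith)
    simp [cI, if_neg hcq, if_neg hcp, hgP, hgQ]
  · -- Case D : x = a  (incident at P)
    have hpP : p ≠ P := by
      intro h; exact hseg (h ▸ left_mem_segment ℝ P Q)
    have hy : p.2 ≠ P.2 := by
      intro h
      apply hpP
      have h1 : p.1 + δ * p.2 = P.1 + δ * P.2 := hxa
      exact Prod.ext (by rw [h] at h1; linarith) h
    have hDp : dt (Q - P) (p - P) = (xi δ Q - xi δ P) * (p.2 - P.2) := by
      rw [dt_eq_xi δ]
      have h2 : xi δ (p - P) = xi δ p - xi δ P := by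
        simp only [xi, Prod.fst_sub, Prod.snd_sub]; ring
      have h3 : xi δ (Q - P) = xi δ Q - xi δ P := by
        simp only [xi, Prod.fst_sub, Prod.snd_sub]; ring
      have e1 : (p - P).2 = p.2 - P.2 := rfl
      rw [h2, h3, hxa, e1]; ring
    have hgQ := hgQb (by intro h; rw [h, hxa] at hab; exact lt_irrefl _ hab)
    rcases hy.lt_or_gt with hy2 | hy2
    · -- D2 : p.2 < P.2
      have hDneg : dt (Q - P) (p - P) < 0 := by rw [hDp]; nlinarith
      have hne : dt (Q - P) (p - P) ≠ 0 := ne_of_lt hDneg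
      refine ⟨|dt (Q - P) (p - P)| / (|(Q - P).1| + |(Q - P).2| + 1),
        div_pos (abs_pos.2 hne) hKD, ?_⟩
      intro q hq
      have hq2 := (hDq q hq).2 hDneg
      have hcq : ¬ cross δ q P Q := by
        rw [crossIff hab]; rintro ⟨_, _, h⟩; linarith
      have hcp : ¬ cross δ p P Q := by
        rw [crossIff hab]; rintro ⟨_, _, h⟩; linarith
      have hgP : gI δ p P = 0 := by
        rw [gI, if_neg]; rintro ⟨_, h⟩; linarith
      simp [cI, if_neg hcq, if_neg hcp, hgP, hgQ]
    · -- D1 : P.2 < p.2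
      have hDpos : 0 < dt (Q - P) (p - P) := by rw [hDp]; nlinarith
      have hne : dt (Q - P) (p - P) ≠ 0 := ne_of_gt hDpos
      have hcp : cross δ p P Q := by
        rw [crossIff hab]
        exact ⟨le_of_eq hxa.symm, by rw [hxa]; exact hab, hDpos⟩
      have hgP : gI δ p P = 1 := by
        rw [gI, if_pos]; exact ⟨hxa.symm, hy2⟩
      refine ⟨min ((xi δ Q - xi δ p) / (1 + |δ|))
        (|dt (Q - P) (p - P)| / (|(Q - P).1| + |(Q - P).2| + 1)),
        lt_min (div_pos (by rw [hxa]; linarith) hKx) (div_pos (abs_pos.2 hne) hKD), ?_⟩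
      intro q hq
      have hq1 := lt_of_lt_of_le hq (min_le_left _ _)
      have hq2 := lt_of_lt_of_le hq (min_le_right _ _)
      have hqb : xi δ q < xi δ Q := by
        have := abs_lt.1 (hxiq (xi δ Q - xi δ p) q hq1); linarith
      have hqD := (hDq q hq2).1 hDpos
      by_cases hql : xi δ q < xi δ p
      · have hcq : ¬ cross δ q P Q := by
          rw [crossIff hab]; rintro ⟨h, _, _⟩; rw [← hxa] at h; linarith
        rw [cI, if_neg hcq, cI, if_pos hcp, if_pos hql, hgP, hgQ]
        decide
      · have hcq : cross δ q P Q := by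
          rw [crossIff hab]
          push_neg at hql
          exact ⟨by rw [← hxa]; exact hql, hqb, hqD⟩
        rw [cI, if_pos hcq, cI, if_pos hcp, if_neg hql]
        decide
  · rcases lt_trichotomy (xi δ p) (xi δ Q) with hxb | hxb | hxb
    · -- Case C : a < x < b  (interior)
      have hgP := hgPa (by intro h; rw [h] at hxa; exact lt_irrefl _ hxa)
      have hgQ := hgQb (by intro h; rw [h] at hxb; exact lt_irrefl _ hxb)
      rcases lt_trichotomy (dt (Q - P) (p - P)) 0 with hD | hD | hD
      · have hne : dt (Q - P) (p - P) ≠ 0 := ne_of_lt hD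
        refine ⟨|dt (Q - P) (p - P)| / (|(Q - P).1| + |(Q - P).2| + 1),
          div_pos (abs_pos.2 hne) hKD, ?_⟩
        intro q hq
        have hq2 := (hDq q hq).2 hD
        have hcq : ¬ cross δ q P Q := by
          rw [crossIff hab]; rintro ⟨_, _, h⟩; linarith
        have hcp : ¬ cross δ p P Q := by
          rw [crossIff hab]; rintro ⟨_, _, h⟩; linarith
        simp [cI, if_neg hcq, if_neg hcp, hgP, hgQ]
      · exact absurd (onSegment δ p P Q hab (le_of_lt hxa) hxb hD) hseg
      · have hne : dt (Q - P) (p - P) ≠ 0 := ne_of_gt hD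
        have hcp : cross δ p P Q := by
          rw [crossIff hab]; exact ⟨le_of_lt hxa, hxb, hD⟩
        refine ⟨min ((xi δ p - xi δ P) / (1 + |δ|)) (min ((xi δ Q - xi δ p) / (1 + |δ|))
          (|dt (Q - P) (p - P)| / (|(Q - P).1| + |(Q - P).2| + 1))),
          lt_min (div_pos (by linarith) hKx) (lt_min (div_pos (by linarith) hKx)
            (div_pos (abs_pos.2 hne) hKD)), ?_⟩
        intro q hq
        have hq1 := lt_of_lt_of_le hq (min_le_left _ _)
        have hq2 := lt_of_lt_of_le hq ((min_le_right _ _).trans (min_le_left _ _))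
        have hq3 := lt_of_lt_of_le hq ((min_le_right _ _).trans (min_le_right _ _))
        have hqa : xi δ P < xi δ q := by
          have := abs_lt.1 (hxiq (xi δ p - xi δ P) q hq1); linarith
        have hqb : xi δ q < xi δ Q := by
          have := abs_lt.1 (hxiq (xi δ Q - xi δ p) q hq2); linarith
        have hqD := (hDq q hq3).1 hD
        have hcq : cross δ q P Q := by
          rw [crossIff hab]; exact ⟨le_of_lt hqa, hqb, hqD⟩
        simp [cI, if_pos hcq, if_pos hcp, hgP, hgQ]
    · -- Case E : x = b (incident at Q)
      have hpQ : p ≠ Q := by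
        intro h; exact hseg (h ▸ right_mem_segment ℝ P Q)
      have hy : p.2 ≠ Q.2 := by
        intro h
        apply hpQ
        have h1 : p.1 + δ * p.2 = Q.1 + δ * Q.2 := hxb
        exact Prod.ext (by rw [h] at h1; linarith) h
      have hDp : dt (Q - P) (p - P) = (xi δ Q - xi δ P) * (p.2 - Q.2) := by
        rw [dt_eq_xi δ]
        have h2 : xi δ (p - P) = xi δ p - xi δ P := by
          simp only [xi, Prod.fst_sub, Prod.snd_sub]; ring
        have h3 : xi δ (Q - P) = xi δ Q - xi δ P := by
          simp only [xi, Prod.fst_sub, Prod.snd_sub]; ring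
        have e1 : (p - P).2 = p.2 - P.2 := rfl
        have e2 : (Q - P).2 = Q.2 - P.2 := rfl
        rw [h2, h3, e1, e2, hxb]; ring
      have hcp : ¬ cross δ p P Q := by
        rw [crossIff hab]; rintro ⟨_, h, _⟩; rw [hxb] at h; exact lt_irrefl _ h
      have hgP := hgPa (by intro h; rw [h] at hxa; exact lt_irrefl _ hxa)
      rcases hy.lt_or_gt with hy2 | hy2
      · -- E2
        have hDneg : dt (Q - P) (p - P) < 0 := by rw [hDp]; nlinarith
        have hne : dt (Q - P) (p - P) ≠ 0 := ne_of_lt hDneg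
        refine ⟨|dt (Q - P) (p - P)| / (|(Q - P).1| + |(Q - P).2| + 1),
          div_pos (abs_pos.2 hne) hKD, ?_⟩
        intro q hq
        have hq2 := (hDq q hq).2 hDneg
        have hcq : ¬ cross δ q P Q := by
          rw [crossIff hab]; rintro ⟨_, _, h⟩; linarith
        have hgQ : gI δ p Q = 0 := by
          rw [gI, if_neg]; rintro ⟨_, h⟩; linarith
        simp [cI, if_neg hcq, if_neg hcp, hgP, hgQ]
      · -- E1
        have hDpos : 0 < dt (Q - P) (p - P) := by rw [hDp]; nlinarith
        have hne : dt (Q - P) (p - P) ≠ 0 := ne_of_gt hDpos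
        have hgQ : gI δ p Q = 1 := by
          rw [gI, if_pos]; exact ⟨hxb.symm, hy2⟩
        refine ⟨min ((xi δ p - xi δ P) / (1 + |δ|))
          (|dt (Q - P) (p - P)| / (|(Q - P).1| + |(Q - P).2| + 1)),
          lt_min (div_pos (by linarith) hKx) (div_pos (abs_pos.2 hne) hKD), ?_⟩
        intro q hq
        have hq1 := lt_of_lt_of_le hq (min_le_left _ _)
        have hq2 := lt_of_lt_of_le hq (min_le_right _ _)
        have hqa : xi δ P < xi δ q := by
          have := abs_lt.1 (hxiq (xi δ p - xi δ P) q hq1); linarith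
        have hqD := (hDq q hq2).1 hDpos
        by_cases hql : xi δ q < xi δ p
        · have hcq : cross δ q P Q := by
            rw [crossIff hab]
            exact ⟨le_of_lt hqa, by rw [← hxb]; exact hql, hqD⟩
          rw [cI, if_pos hcq, cI, if_neg hcp, if_pos hql, hgP, hgQ]
          decide
        · have hcq : ¬ cross δ q P Q := by
            rw [crossIff hab]; rintro ⟨_, h, _⟩
            push_neg at hql
            rw [← hxb] at h; linarith
          rw [cI, if_neg hcq, cI, if_neg hcp, if_neg hql]
          decide
    · -- Case B : b < x
      refine ⟨(xi δ p - xi δ Q) / (1 + |δ|), div_pos (by linarith) hKx, ?_⟩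
      intro q hq
      have h1 : xi δ Q < xi δ q := by
        have := abs_lt.1 (hxiq (xi δ p - xi δ Q) q hq); linarith
      have hcq : ¬ cross δ q P Q := by
        rw [crossIff hab]; rintro ⟨_, h, _⟩; linarith
      have hcp : ¬ cross δ p P Q := by
        rw [crossIff hab]; rintro ⟨_, h, _⟩; linarith
      have hgP := hgPa (by intro h; rw [h] at hxa; linarith)
      have hgQ := hgQb (by intro h; rw [h] at hxb; exact lt_irrefl _ hxb)
      simp [cI, if_neg hcq, if_neg hcp, hgP, hgQ]

/-- general jump lemma -/
lemma cI_jump (hg : xi δ P = xi δ Q → P = Q) (hseg : p ∉ segment ℝ P Q) :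
    ∃ ε > 0, ∀ q, dist q p < ε →
      cI δ q P Q = cI δ p P Q + (if xi δ q < xi δ p then gI δ p P + gI δ p Q else 0) := by
  rcases lt_trichotomy (xi δ P) (xi δ Q) with h | h | h
  · exact cI_jump_lt h hseg
  · -- degenerate edge : P = Q, nothing ever crosses
    have hPQ := hg h
    subst hPQ
    have hnc : ∀ q : ℝ × ℝ, ¬ cross δ q P P := by
      rintro q (⟨h1, h2, _⟩ | ⟨h1, h2, _⟩) <;> linarith
    refine ⟨1, one_pos, ?_⟩
    intro q _
    rw [cI, if_neg (hnc q), cI, if_neg (hnc p)]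
    rw [zmod2_add_self (gI δ p P)]
    simp
  · -- swap
    have hseg' : p ∉ segment ℝ Q P := by rw [segment_symm]; exact hseg
    obtain ⟨ε, hε, hq⟩ := cI_jump_lt h hseg'
    refine ⟨ε, hε, ?_⟩
    intro q hdq
    have h1 := hq q hdq
    have e : ∀ r : ℝ × ℝ, cI δ r P Q = cI δ r Q P := by
      intro r; rw [cI, cI]
      by_cases hc : cross δ r P Q
      · rw [if_pos hc, if_pos ((cross_swap δ r P Q).1 hc)]
      · rw [if_neg hc, if_neg (fun hc2 => hc ((cross_swap δ r P Q).2 hc2))]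
    rw [e q, e p, h1, add_comm (gI δ p Q) (gI δ p P)]

end Jump

noncomputable def W (δ : ℝ) {N : ℕ} [NeZero N] (V : Fin N → ℝ × ℝ) (p : ℝ × ℝ) : ZMod 2 :=
  ∑ j : Fin N, cI δ p (V j) (V (j + 1))

lemma W_locConst (δ : ℝ) {N : ℕ} [NeZero N] (V : Fin N → ℝ × ℝ) (p : ℝ × ℝ)
    (hg : ∀ j : Fin N, xi δ (V j) = xi δ (V (j + 1)) → V j = V (j + 1))
    (hseg : ∀ j : Fin N, p ∉ segment ℝ (V j) (V (j + 1))) :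
    ∃ ε > 0, ∀ q, dist q p < ε → W δ V q = W δ V p := by
  have hN : 0 < N := Nat.pos_of_ne_zero (NeZero.ne N)
  haveI : Nonempty (Fin N) := ⟨⟨0, hN⟩⟩
  choose ε hε hprop using fun j : Fin N => cI_jump (hg j) (hseg j)
  refine ⟨Finset.univ.inf' Finset.univ_nonempty ε, ?_, ?_⟩
  · rw [gt_iff_lt, Finset.lt_inf'_iff]
    intro j _; exact hε j
  · intro q hq
    have hqj : ∀ j : Fin N, dist q p < ε j := by
      intro j
      exact lt_of_lt_of_le hq (Finset.inf'_le _ (Finset.mem_univ j))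
    have h1 : W δ V q = ∑ j : Fin N, (cI δ p (V j) (V (j + 1)) +
        (if xi δ q < xi δ p then gI δ p (V j) + gI δ p (V (j + 1)) else 0)) := by
      rw [W]
      exact Finset.sum_congr rfl fun j _ => hprop j q (hqj j)
    rw [h1, Finset.sum_add_distrib]
    have h2 : ∑ j : Fin N, (if xi δ q < xi δ p then gI δ p (V j) + gI δ p (V (j + 1)) else 0)
        = 0 := by
      by_cases hc : xi δ q < xi δ p
      · simp only [if_pos hc]
        rw [Finset.sum_add_distrib]
        have h3 : ∑ j : Fin N, gI δ p (V (j + 1)) = ∑ j : Fin N, gI δ p (V j) :=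
          Fintype.sum_equiv (Equiv.addRight (1 : Fin N)) _ _ (fun j => rfl)
        rw [h3, zmod2_add_self]
      · simp only [if_neg hc, Finset.sum_const_zero]
    rw [h2, add_zero, W]

lemma W_const_path (δ : ℝ) {N : ℕ} [NeZero N] (V : Fin N → ℝ × ℝ) (γ : ℝ → ℝ × ℝ)
    {a b : ℝ} (hab : a ≤ b) (hγ : ContinuousOn γ (Set.Icc a b))
    (hloc : ∀ u ∈ Set.Icc a b, ∃ ε > 0, ∀ q, dist q (γ u) < ε → W δ V q = W δ V (γ u)) :
    W δ V (γ b) = W δ V (γ a) := by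
  set S := {u : ℝ | u ∈ Set.Icc a b ∧ W δ V (γ u) = W δ V (γ a)} with hS
  have haS : a ∈ S := ⟨⟨le_refl a, hab⟩, rfl⟩
  have hSne : S.Nonempty := ⟨a, haS⟩
  have hSbdd : BddAbove S := ⟨b, fun u hu => hu.1.2⟩
  set c := sSup S with hc
  have hac : a ≤ c := le_csSup hSbdd haS
  have hcb : c ≤ b := csSup_le hSne (fun u hu => hu.1.2)
  have hcI : c ∈ Set.Icc a b := ⟨hac, hcb⟩
  obtain ⟨ε, hε, hWball⟩ := hloc c hcI
  obtain ⟨η, hη, hcont⟩ := Metric.continuousWithinAt_iff.1 (hγ c hcI) ε hε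
  have hWc : W δ V (γ c) = W δ V (γ a) := by
    obtain ⟨u, huS, hu⟩ := exists_lt_of_lt_csSup hSne (by linarith : c - η < c)
    have huc : u ≤ c := le_csSup hSbdd huS
    have hdist : dist u c < η := by
      rw [Real.dist_eq, abs_lt]; constructor <;> linarith
    have := hcont huS.1 hdist
    have h1 := hWball (γ u) this
    rw [← h1, huS.2]
  have hceqb : c = b := by
    by_contra hne
    have hclt : c < b := lt_of_le_of_ne hcb hne
    set u := min b (c + η / 2) with hu
    have huc : c < u := by
      rw [hu]; apply lt_min hclt; linarith
    have huI : u ∈ Set.Icc a b := ⟨by linarith [min_le_left b (c + η/2)],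
      min_le_left _ _⟩
    have hdist : dist u c < η := by
      rw [Real.dist_eq, abs_lt]
      constructor
      · linarith [huc]
      · have : u ≤ c + η / 2 := min_le_right _ _
        linarith
    have := hWball (γ u) (hcont huI hdist)
    have huS : u ∈ S := ⟨huI, by rw [this, hWc]⟩
    exact absurd (le_csSup hSbdd huS) (not_le.2 huc)
  rw [← hceqb, hWc]


section FStruct
variable {τ : ℝ} {f F : ℝ → ℝ × ℝ}

lemma hFer (hτ : 0 < τ)
    (hF : ∀ (k : ℤ) (r : ℝ), 0 ≤ r → r < τ → F (k * τ + r) = k • (f τ - f 0) + f r)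
    (hf0 : f 0 = (0, 0)) :
    ∀ (k : ℤ) (r : ℝ), 0 ≤ r → r ≤ τ → F (k * τ + r) = k • f τ + f r := by
  have hsub : f τ - f 0 = f τ := by rw [hf0]; show f τ - 0 = f τ; rw [sub_zero]
  intro k r h0 h1
  rcases lt_or_eq_of_le h1 with h | h
  · rw [hF k r h0 h, hsub]
  · subst h
    have e1 : (k : ℝ) * r + r = (k + 1 : ℤ) * r + 0 := by push_cast; ring
    rw [e1, hF (k + 1) 0 (le_refl 0) hτ, hsub, hf0]
    show (k + 1) • f r + 0 = k • f r + f r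
    rw [add_zero, add_zsmul, one_zsmul]

lemma floor_decomp (hτ : 0 < τ) (u : ℝ) :
    (⌊u / τ⌋ : ℝ) * τ ≤ u ∧ u < (⌊u / τ⌋ + 1 : ℝ) * τ := by
  constructor
  · rw [← le_div_iff₀ hτ]; exact Int.floor_le _
  · rw [← div_lt_iff₀ hτ]
    have := Int.lt_floor_add_one (u / τ)
    push_cast
    linarith

lemma hFdec (hτ : 0 < τ)
    (hF : ∀ (k : ℤ) (r : ℝ), 0 ≤ r → r < τ → F (k * τ + r) = k • (f τ - f 0) + f r)
    (hf0 : f 0 = (0, 0)) (u : ℝ) :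
    ∃ k : ℤ, ∃ r : ℝ, 0 ≤ r ∧ r < τ ∧ u = k * τ + r ∧ F u = k • f τ + f r := by
  obtain ⟨h1, h2⟩ := floor_decomp hτ u
  refine ⟨⌊u / τ⌋, u - ⌊u / τ⌋ * τ, by linarith, by push_cast at h2 ⊢; linarith, by ring, ?_⟩
  have e : u = (⌊u / τ⌋ : ℝ) * τ + (u - ⌊u / τ⌋ * τ) := by ring
  rw [← hFer hτ hF hf0 ⌊u / τ⌋ (u - ⌊u / τ⌋ * τ) (by linarith)
    (by push_cast at h2 ⊢; linarith), ← e]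

lemma hshift (hτ : 0 < τ)
    (hF : ∀ (k : ℤ) (r : ℝ), 0 ≤ r → r < τ → F (k * τ + r) = k • (f τ - f 0) + f r)
    (hf0 : f 0 = (0, 0)) (u : ℝ) : F (u + τ) = F u + f τ := by
  obtain ⟨k, r, h0, h1, he, hFu⟩ := hFdec hτ hF hf0 u
  have e1 : u + τ = (k + 1 : ℤ) * τ + r := by rw [he]; push_cast; ring
  rw [e1, hFer hτ hF hf0 (k + 1) r h0 (le_of_lt h1), hFu, add_zsmul, one_zsmul]
  abel

lemma hshiftn (hτ : 0 < τ)
    (hF : ∀ (k : ℤ) (r : ℝ), 0 ≤ r → r < τ → F (k * τ + r) = k • (f τ - f 0) + f r)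
    (hf0 : f 0 = (0, 0)) (u : ℝ) (n : ℕ) : F (u + n * τ) = F u + n • f τ := by
  induction n with
  | zero => simp
  | succ n ih =>
      have e1 : u + (n + 1 : ℕ) * τ = (u + n * τ) + τ := by push_cast; ring
      rw [e1, hshift hτ hF hf0, ih, succ_nsmul]
      abel

lemma contF (hτ : 0 < τ) (hf : ContinuousOn f (Set.Icc 0 τ))
    (hF : ∀ (k : ℤ) (r : ℝ), 0 ≤ r → r < τ → F (k * τ + r) = k • (f τ - f 0) + f r)
    (hf0 : f 0 = (0, 0)) : Continuous F := by
  have hpiece : ∀ k : ℤ, ContinuousOn F (Set.Icc ((k : ℝ) * τ) ((k + 1 : ℝ) * τ)) := by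
    intro k
    have ekp : ((k : ℝ) + 1) * τ = (k : ℝ) * τ + τ := by ring
    have heq : ∀ u ∈ Set.Icc ((k : ℝ) * τ) ((k + 1 : ℝ) * τ),
        F u = k • f τ + f (u - k * τ) := by
      intro u hu
      have e : u = (k : ℝ) * τ + (u - k * τ) := by ring
      rw [← hFer hτ hF hf0 k (u - k * τ) (by linarith [hu.1])
        (by have := hu.2; rw [ekp] at this; linarith), ← e]
    apply ContinuousOn.congr _ heq
    apply ContinuousOn.add continuousOn_const
    apply hf.comp ((continuous_id.sub continuous_const).continuousOn)
    intro u hu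
    simp only [Set.mem_Icc, id_eq, Pi.sub_apply]
    have h2 := hu.2
    rw [ekp] at h2
    exact ⟨by linarith [hu.1], by linarith⟩
  rw [continuous_iff_continuousAt]
  intro u
  obtain ⟨h1, h2⟩ := floor_decomp hτ u
  set k := ⌊u / τ⌋ with hk
  have ekm : ((k : ℝ) - 1) * τ = (k : ℝ) * τ - τ := by ring
  have ekp : ((k : ℝ) + 1) * τ = (k : ℝ) * τ + τ := by ring
  rcases eq_or_lt_of_le h1 with h | h
  · -- u = k * τ : glue the two pieces
    have e1 : ((k : ℝ) - 1) * τ = ((k - 1 : ℤ) : ℝ) * τ := by push_cast; ring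
    have e2 : (k : ℝ) * τ = (((k - 1 : ℤ) : ℝ) + 1) * τ := by push_cast; ring
    have hl : ContinuousWithinAt F (Set.Icc (((k : ℝ) - 1) * τ) ((k : ℝ) * τ)) u := by
      rw [e1, e2]
      apply (hpiece (k - 1)).continuousWithinAt
      rw [Set.mem_Icc]
      push_cast
      constructor
      · rw [← h]; nlinarith
      · rw [← h]; nlinarith
    have hr : ContinuousWithinAt F (Set.Icc ((k : ℝ) * τ) (((k : ℝ) + 1) * τ)) u :=
      (hpiece k).continuousWithinAt ⟨h1, le_of_lt h2⟩
    have hun := hl.union hr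
    have hicc : Set.Icc (((k : ℝ) - 1) * τ) ((k : ℝ) * τ) ∪
        Set.Icc ((k : ℝ) * τ) (((k : ℝ) + 1) * τ)
        = Set.Icc (((k : ℝ) - 1) * τ) (((k : ℝ) + 1) * τ) :=
      Set.Icc_union_Icc_eq_Icc (by rw [ekm]; linarith) (by rw [ekp]; linarith)
    rw [hicc] at hun
    apply hun.continuousAt
    apply Icc_mem_nhds (by rw [ekm, ← h]; linarith) h2
  · have : ContinuousWithinAt F (Set.Icc ((k : ℝ) * τ) ((k + 1 : ℝ) * τ)) u :=
      (hpiece k).continuousWithinAt ⟨h1, le_of_lt h2⟩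
    apply this.continuousAt
    apply Icc_mem_nhds h h2

lemma affF {m : ℕ} {t : Fin (m + 1) → ℝ} (hτ : 0 < τ) (hmono : StrictMono t)
    (h0 : t 0 = 0) (hlast : t (Fin.last m) = τ)
    (hlin : ∀ (i : Fin m) (s : ℝ), s ∈ Set.Icc (t i.castSucc) (t i.succ) →
      f s = f (t i.castSucc) + ((s - t i.castSucc) / (t i.succ - t i.castSucc)) •
        (f (t i.succ) - f (t i.castSucc)))
    (hF : ∀ (k : ℤ) (r : ℝ), 0 ≤ r → r < τ → F (k * τ + r) = k • (f τ - f 0) + f r)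
    (hf0 : f 0 = (0, 0)) :
    ∀ (k : ℤ) (i : Fin m), ∀ u ∈ Set.Icc ((k : ℝ) * τ + t i.castSucc)
      ((k : ℝ) * τ + t i.succ),
      F u = F ((k : ℝ) * τ + t i.castSucc) +
        ((u - ((k : ℝ) * τ + t i.castSucc)) / (t i.succ - t i.castSucc)) •
          (F ((k : ℝ) * τ + t i.succ) - F ((k : ℝ) * τ + t i.castSucc)) := by
  intro k i u hu
  have hcs0 : 0 ≤ t i.castSucc := by
    rw [← h0]; exact (hmono.monotone (Fin.zero_le _))
  have hsτ : t i.succ ≤ τ := by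
    rw [← hlast]; exact (hmono.monotone (Fin.le_last _))
  have hcss : t i.castSucc < t i.succ := hmono (Fin.castSucc_lt_succ : i.castSucc < i.succ)
  have hr1 : t i.castSucc ≤ u - k * τ := by linarith [hu.1]
  have hr2 : u - k * τ ≤ t i.succ := by linarith [hu.2]
  have hFu : F u = k • f τ + f (u - k * τ) := by
    have e : u = (k : ℝ) * τ + (u - k * τ) := by ring
    rw [← hFer hτ hF hf0 k (u - k * τ) (by linarith) (by linarith), ← e]
  have hFa : F ((k : ℝ) * τ + t i.castSucc) = k • f τ + f (t i.castSucc) :=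
    hFer hτ hF hf0 k _ hcs0 (by linarith)
  have hFb : F ((k : ℝ) * τ + t i.succ) = k • f τ + f (t i.succ) :=
    hFer hτ hF hf0 k _ (by linarith) hsτ
  rw [hFu, hFa, hFb, hlin i (u - k * τ) ⟨hr1, hr2⟩]
  have e2 : k • f τ + f (t i.succ) - (k • f τ + f (t i.castSucc))
      = f (t i.succ) - f (t i.castSucc) := by abel
  have e1 : u - ((k : ℝ) * τ + t i.castSucc) = u - k * τ - t i.castSucc := by ring
  rw [e2, e1, add_assoc]

lemma seg_sub_image {a' b' d : ℝ} {α β : ℝ} (hαβ : α ≤ β)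
    (hsub : Set.Icc α β ⊆ Set.Icc a' b')
    (haff : ∀ u ∈ Set.Icc a' b', F u = F a' + ((u - a') / d) • (F b' - F a')) :
    ∀ z ∈ segment ℝ (F α) (F β), ∃ w ∈ Set.Icc α β, F w = z := by
  intro z hz
  rw [segment_eq_image'] at hz
  obtain ⟨μ, hμ, hzz⟩ := hz
  obtain ⟨hμ0, hμ1⟩ := hμ
  refine ⟨α + μ * (β - α), ⟨by nlinarith, by nlinarith⟩, ?_⟩
  have hwmem : α + μ * (β - α) ∈ Set.Icc a' b' := hsub ⟨by nlinarith, by nlinarith⟩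
  have hαm : α ∈ Set.Icc a' b' := hsub ⟨le_refl _, hαβ⟩
  have hβm : β ∈ Set.Icc a' b' := hsub ⟨hαβ, le_refl _⟩
  rw [haff _ hwmem, ← hzz, haff _ hαm, haff _ hβm]
  have e1 : F a' + ((β - a') / d) • (F b' - F a') -
      (F a' + ((α - a') / d) • (F b' - F a'))
      = ((β - a') / d - (α - a') / d) • (F b' - F a') := by
    rw [add_sub_add_left_eq_sub, ← sub_smul]
  rw [e1]
  show F a' + ((α + μ * (β - α) - a') / d) • (F b' - F a')
      = F a' + ((α - a') / d) • (F b' - F a') +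
        μ • ((β - a') / d - (α - a') / d) • (F b' - F a')
  rw [smul_smul, add_assoc, ← add_smul]
  congr 1
  ring
end FStruct


section Poly
variable (F : ℝ → ℝ × ℝ) (τ t₁ : ℝ) {m : ℕ} (t : Fin (m + 1) → ℝ) (x1 c : ℝ)

def tnP (j : ℕ) : ℝ := t ⟨min j m, Nat.lt_succ_of_le (min_le_right _ _)⟩

def TP (j : ℕ) : ℝ := if j ≤ m then tnP t j else τ + tnP t (j - m)

def vtP (j : ℕ) : ℝ := max t₁ (min (t₁ + τ) ((⌊t₁ / τ⌋ : ℝ) * τ + TP τ t j))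

def VnP (j : ℕ) : ℝ × ℝ :=
  if j ≤ 2 * m then F (vtP τ t₁ t j)
  else if j = 2 * m + 1 then (x1 + c + 1, -1) else (x1 - 1, -1)

variable {t}

lemma tnP_mono (hmono : StrictMono t) : Monotone (tnP t) := by
  intro i j hij
  exact hmono.monotone (by simp only [Fin.mk_le_mk]; omega)

lemma TP_mono (hmono : StrictMono t) (h0 : t 0 = 0)
    (hlast : t (Fin.last m) = τ) : Monotone (TP τ t) := by
  have htn0 : ∀ j, 0 ≤ tnP t j := by
    intro j
    rw [← h0]
    exact hmono.monotone (Fin.zero_le _)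
  have htnτ : ∀ j, tnP t j ≤ τ := by
    intro j
    rw [← hlast]
    exact hmono.monotone (Fin.le_last _)
  intro i j hij
  rw [TP, TP]
  by_cases hi : i ≤ m <;> by_cases hj : j ≤ m
  · rw [if_pos hi, if_pos hj]; exact tnP_mono hmono hij
  · rw [if_pos hi, if_neg hj]
    have := htnτ i
    have := htn0 (j - m)
    linarith
  · omega
  · rw [if_neg hi, if_neg hj]
    have := tnP_mono hmono (show i - m ≤ j - m by omega)
    linarith

lemma vtP_mono (hτ : 0 < τ) (hmono : StrictMono t) (h0 : t 0 = 0)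
    (hlast : t (Fin.last m) = τ) : Monotone (vtP τ t₁ t) := by
  intro i j hij
  apply max_le_max (le_refl t₁)
  apply min_le_min (le_refl _)
  have := TP_mono (τ := τ) hmono h0 hlast hij
  linarith

lemma vtP_mem (hτ : 0 < τ) (j : ℕ) : vtP τ t₁ t j ∈ Set.Icc t₁ (t₁ + τ) := by
  constructor
  · exact le_max_left _ _
  · apply max_le (by linarith)
    exact le_trans (min_le_left _ _) (le_refl _)

lemma vtP_zero (hτ : 0 < τ) (h0 : t 0 = 0) : vtP τ t₁ t 0 = t₁ := by
  have h1 : TP τ t 0 = 0 := by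
    rw [TP, if_pos (Nat.zero_le m), tnP]
    have : (⟨min 0 m, Nat.lt_succ_of_le (min_le_right _ _)⟩ : Fin (m + 1)) = 0 := by
      ext; simp
    rw [this, h0]
  rw [vtP, h1, add_zero]
  have h2 := (floor_decomp hτ t₁).1
  rw [min_eq_right (by linarith), max_eq_left (by linarith)]

lemma vtP_top (hτ : 0 < τ) (hm : 1 ≤ m) (hlast : t (Fin.last m) = τ) :
    vtP τ t₁ t (2 * m) = t₁ + τ := by
  have h1 : TP τ t (2 * m) = τ + τ := by
    rw [TP, if_neg (by omega), tnP]
    have : (⟨min (2 * m - m) m, Nat.lt_succ_of_le (min_le_right _ _)⟩ : Fin (m + 1))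
        = Fin.last m := by
      ext; simp [Fin.last]; omega
    rw [this, hlast]
  rw [vtP, h1]
  have h2 := (floor_decomp hτ t₁).2
  have : t₁ + τ ≤ (⌊t₁ / τ⌋ : ℝ) * τ + (τ + τ) := by linarith
  rw [min_eq_left this, max_eq_right (by linarith)]

lemma hcell (hτ : 0 < τ) (hm : 1 ≤ m) (hmono : StrictMono t) (h0 : t 0 = 0)
    (hlast : t (Fin.last m) = τ) :
    ∀ j < 2 * m, ∃ (kk : ℤ) (i : Fin m),
      (⌊t₁ / τ⌋ : ℝ) * τ + TP τ t j = (kk : ℝ) * τ + t i.castSucc ∧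
      (⌊t₁ / τ⌋ : ℝ) * τ + TP τ t (j + 1) = (kk : ℝ) * τ + t i.succ := by
  intro j hj
  rcases lt_or_ge j m with h | h
  · refine ⟨⌊t₁ / τ⌋, ⟨j, h⟩, ?_, ?_⟩
    · congr 1
      rw [TP, if_pos (le_of_lt h), tnP]
      congr 1
      ext; simp [Fin.castSucc, Fin.castAdd, Fin.castLE]; omega
    · congr 1
      rw [TP, if_pos (by omega), tnP]
      congr 1
      ext; simp [Fin.succ]; omega
  · have him : j - m < m := by omega
    refine ⟨⌊t₁ / τ⌋ + 1, ⟨j - m, him⟩, ?_, ?_⟩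
    · have ecs : ((⟨j - m, him⟩ : Fin m).castSucc) = (⟨j - m, by omega⟩ : Fin (m + 1)) := by
        ext; simp [Fin.castSucc, Fin.castAdd, Fin.castLE]
      rw [ecs]
      rcases eq_or_lt_of_le h with he | hlt
      · have hTj : TP τ t j = τ := by
          rw [TP, if_pos (by omega), tnP]
          have e1 : (⟨min j m, Nat.lt_succ_of_le (min_le_right _ _)⟩ : Fin (m + 1))
              = Fin.last m := by ext; simp [Fin.last]; omega
          rw [e1, hlast]
        have e0 : (⟨j - m, by omega⟩ : Fin (m + 1)) = 0 := by ext; simp; omega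
        rw [hTj, e0, h0]
        push_cast; ring
      · have hTj : TP τ t j = τ + t ⟨j - m, by omega⟩ := by
          rw [TP, if_neg (by omega), tnP]
          congr 1
          exact congrArg t (Fin.ext (by simp; omega))
        rw [hTj]; push_cast; ring
    · have esc : ((⟨j - m, him⟩ : Fin m).succ) = (⟨j - m + 1, by omega⟩ : Fin (m + 1)) := by
        ext; simp [Fin.succ]
      rw [esc]
      have hTj : TP τ t (j + 1) = τ + t ⟨j - m + 1, by omega⟩ := by
        rw [TP, if_neg (by omega), tnP]
        congr 1
        exact congrArg t (Fin.ext (by simp; omega))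
      rw [hTj]; push_cast; ring

lemma clamp_sub (hτ : 0 < τ) {lo hi : ℝ} (hle : lo ≤ hi)
    (hne : max t₁ (min (t₁ + τ) lo) ≠ max t₁ (min (t₁ + τ) hi)) :
    lo ≤ max t₁ (min (t₁ + τ) lo) ∧ max t₁ (min (t₁ + τ) hi) ≤ hi := by
  constructor
  · by_cases h : lo ≤ t₁ + τ
    · rw [min_eq_right h]; exact le_max_right _ _
    · exfalso
      push_neg at h
      apply hne
      rw [min_eq_left (by linarith), min_eq_left (by linarith)]
  · by_cases h : t₁ ≤ hi
    · exact max_le h (min_le_right _ _)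
    · exfalso
      push_neg at h
      apply hne
      rw [min_eq_right (by linarith), min_eq_right (by linarith),
        max_eq_left (by linarith), max_eq_left (by linarith)]

end Poly

section Harc
variable {τ : ℝ} {f F : ℝ → ℝ × ℝ} {m : ℕ} {t : Fin (m + 1) → ℝ} {t₁ x1 c : ℝ}

lemma harc (hτ : 0 < τ) (hm : 1 ≤ m) (hmono : StrictMono t) (h0 : t 0 = 0)
    (hlast : t (Fin.last m) = τ)
    (hlin : ∀ (i : Fin m) (s : ℝ), s ∈ Set.Icc (t i.castSucc) (t i.succ) →
      f s = f (t i.castSucc) + ((s - t i.castSucc) / (t i.succ - t i.castSucc)) •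
        (f (t i.succ) - f (t i.castSucc)))
    (hF : ∀ (k : ℤ) (r : ℝ), 0 ≤ r → r < τ → F (k * τ + r) = k • (f τ - f 0) + f r)
    (hf0 : f 0 = (0, 0)) :
    ∀ j < 2 * m, ∀ z ∈ segment ℝ (VnP F τ t₁ t x1 c j) (VnP F τ t₁ t x1 c (j + 1)),
      ∃ w ∈ Set.Icc t₁ (t₁ + τ), F w = z := by
  intro j hj z hz
  have hVj : VnP F τ t₁ t x1 c j = F (vtP τ t₁ t j) := if_pos (by omega)
  have hVj1 : VnP F τ t₁ t x1 c (j + 1) = F (vtP τ t₁ t (j + 1)) := if_pos (by omega)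
  rw [hVj, hVj1] at hz
  by_cases hdeg : vtP τ t₁ t j = vtP τ t₁ t (j + 1)
  · rw [hdeg, segment_same, Set.mem_singleton_iff] at hz
    exact ⟨vtP τ t₁ t (j + 1), vtP_mem τ t₁ hτ (j + 1), hz.symm⟩
  · obtain ⟨kk, i, elo, ehi⟩ := hcell (τ := τ) (t₁ := t₁) hτ hm hmono h0 hlast j hj
    have hle : (⌊t₁ / τ⌋ : ℝ) * τ + TP τ t j ≤ (⌊t₁ / τ⌋ : ℝ) * τ + TP τ t (j + 1) := by
      have := TP_mono (τ := τ) hmono h0 hlast (Nat.le_succ j); linarith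
    have hdeg' : max t₁ (min (t₁ + τ) ((⌊t₁ / τ⌋ : ℝ) * τ + TP τ t j)) ≠
        max t₁ (min (t₁ + τ) ((⌊t₁ / τ⌋ : ℝ) * τ + TP τ t (j + 1))) := hdeg
    obtain ⟨h1, h2⟩ := clamp_sub (τ := τ) (t₁ := t₁) hτ hle hdeg'
    have hmono_vt : vtP τ t₁ t j ≤ vtP τ t₁ t (j + 1) :=
      vtP_mono τ t₁ hτ hmono h0 hlast (Nat.le_succ j)
    have hsub : Set.Icc (vtP τ t₁ t j) (vtP τ t₁ t (j + 1)) ⊆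
        Set.Icc ((kk : ℝ) * τ + t i.castSucc) ((kk : ℝ) * τ + t i.succ) := by
      rw [← elo, ← ehi]
      intro u hu
      exact ⟨le_trans h1 hu.1, le_trans hu.2 h2⟩
    have haff := affF hτ hmono h0 hlast hlin hF hf0 kk i
    obtain ⟨w, hw, hFw⟩ := seg_sub_image hmono_vt hsub haff z hz
    refine ⟨w, ?_, hFw⟩
    have hmem1 := vtP_mem τ t₁ (t := t) hτ j
    have hmem2 := vtP_mem τ t₁ (t := t) hτ (j + 1)
    exact ⟨le_trans hmem1.1 hw.1, le_trans hw.2 hmem2.2⟩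

end Harc

lemma seg_coords {P Q z : ℝ × ℝ} (hz : z ∈ segment ℝ P Q) :
    ∃ μ : ℝ, 0 ≤ μ ∧ μ ≤ 1 ∧ z.1 = P.1 + μ * (Q.1 - P.1) ∧ z.2 = P.2 + μ * (Q.2 - P.2) := by
  rw [segment_eq_image'] at hz
  obtain ⟨μ, ⟨h0, h1⟩, hzz⟩ := hz
  refine ⟨μ, h0, h1, ?_, ?_⟩
  · rw [← hzz]
    simp [Prod.fst_add, Prod.smul_fst, Prod.fst_sub, smul_eq_mul]
  · rw [← hzz]
    simp [Prod.snd_add, Prod.smul_snd, Prod.snd_sub, smul_eq_mul]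

end Stmt14Aux

set_option maxHeartbeats 2000000 in
/-- `F` is the periodic extension of the continuous piecewise-linear map
`f : [0, τ] → ℝ²`. The zeros of the second coordinate of `F` appear in
strictly increasing first-coordinate order. -/
theorem stmt14 (τ : ℝ) (hτ : 0 < τ) (f F : ℝ → ℝ × ℝ)
    (hf : ContinuousOn f (Set.Icc 0 τ))
    (hPL : ∃ (m : ℕ) (t : Fin (m + 1) → ℝ), StrictMono t ∧ t 0 = 0 ∧
      t (Fin.last m) = τ ∧
      ∀ (i : Fin m) (s : ℝ), s ∈ Set.Icc (t i.castSucc) (t i.succ) →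
        f s = f (t i.castSucc) +
          ((s - t i.castSucc) / (t i.succ - t i.castSucc)) •
            (f (t i.succ) - f (t i.castSucc)))
    (hF : ∀ (k : ℤ) (r : ℝ), 0 ≤ r → r < τ →
      F (k * τ + r) = k • (f τ - f 0) + f r)
    (hinj : Function.Injective F)
    (hf0 : f 0 = (0, 0)) (hfτ2 : (f τ).2 = 0) (hfτ1 : 0 < (f τ).1)
    (hmin : (∀ t : ℝ, 0 ≤ (F t).2) ∧ (∃ t : ℝ, (F t).2 = 0)) :
    ∀ t₁ t₂ : ℝ, t₁ < t₂ → (F t₁).2 = 0 → (F t₂).2 = 0 → (F t₁).1 < (F t₂).1 := by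
  intro t₁ t₂ ht12 hz1 hz2
  by_contra hcon
  push_neg at hcon
  obtain ⟨m, t, hmono, h0, hlast, hlin⟩ := hPL
  have hy : ∀ u, 0 ≤ (F u).2 := hmin.1
  have hm : 1 ≤ m := by
    by_contra h
    push_neg at h
    interval_cases m
    · rw [show (Fin.last 0) = 0 from rfl, h0] at hlast
      linarith
  have hc : 0 < (f τ).1 := hfτ1
  have hvc : f τ = ((f τ).1, 0) := Prod.ext rfl hfτ2
  have hxinj : ∀ u w : ℝ, (F u).2 = 0 → (F w).2 = 0 → (F u).1 = (F w).1 → u = w := by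
    intro u w h1 h2 h3
    exact hinj (Prod.ext h3 (by rw [h1, h2]))
  have hnsmul : ∀ (n : ℕ) (x y : ℝ), n • ((x, y) : ℝ × ℝ) = ((n : ℝ) * x, (n : ℝ) * y) := by
    intro n x y
    induction n with
    | zero => simp; rfl
    | succ n ih =>
        rw [succ_nsmul, ih]
        apply Prod.ext <;> push_cast <;> simp <;> ring
  have hFsh : ∀ (u : ℝ) (n : ℕ), F (u + n * τ) = F u + n • f τ :=
    fun u n => hshiftn hτ hF hf0 u n
  have hxsh : ∀ (u : ℝ) (n : ℕ), (F (u + n * τ)).1 = (F u).1 + n * (f τ).1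
      ∧ (F (u + n * τ)).2 = (F u).2 := by
    intro u n
    rw [hFsh u n, hvc, hnsmul]
    constructor
    · rw [Prod.fst_add]
    · rw [Prod.snd_add]
      simp
  -- bad pair: x2 < x1
  have hx21 : (F t₂).1 < (F t₁).1 := by
    rcases lt_or_eq_of_le hcon with h | h
    · exact h
    · exact absurd (hxinj t₂ t₁ hz2 hz1 h) (ne_of_gt ht12)
  -- find minimal shift
  have hex : ∃ n : ℕ, (F t₁).1 < (F t₂).1 + n * (f τ).1 := by
    obtain ⟨n, hn⟩ := exists_nat_gt (((F t₁).1 - (F t₂).1) / (f τ).1)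
    refine ⟨n, ?_⟩
    rw [div_lt_iff₀ hc] at hn
    linarith
  set k := Nat.find hex with hkdef
  have hk : (F t₁).1 < (F t₂).1 + k * (f τ).1 := Nat.find_spec hex
  have hk1 : 1 ≤ k := by
    rcases Nat.eq_zero_or_pos k with h | h
    · exfalso
      rw [h] at hk
      push_cast at hk
      linarith
    · exact h
  have hkm : ¬ ((F t₁).1 < (F t₂).1 + (↑(k - 1) : ℝ) * (f τ).1) :=
    Nat.find_min hex (by omega)
  push_neg at hkm
  have hcast : ((k - 1 : ℕ) : ℝ) = (k : ℝ) - 1 := by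
    push_cast [Nat.cast_sub hk1]
    ring
  have hstrict : (F t₂).1 + ((k : ℝ) - 1) * (f τ).1 < (F t₁).1 := by
    rcases lt_or_eq_of_le hkm with h | h
    · rw [hcast] at h; exact h
    · exfalso
      have h2 := (hxsh t₂ (k - 1)).2
      have h1 := (hxsh t₂ (k - 1)).1
      rw [hz2] at h2
      have := hxinj (t₂ + ((k - 1 : ℕ) : ℝ) * τ) t₁ h2 hz1 (by rw [h1, h])
      have hge : t₁ < t₂ + ((k - 1 : ℕ) : ℝ) * τ := by
        have : (0:ℝ) ≤ ((k - 1 : ℕ) : ℝ) * τ := by positivity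
        linarith
      rw [this] at hge
      exact lt_irrefl _ hge
  -- the distinguished zero s
  have hs2 : (F (t₂ + k * τ)).2 = 0 := by rw [(hxsh t₂ k).2, hz2]
  have hsx : (F (t₂ + k * τ)).1 = (F t₂).1 + k * (f τ).1 := (hxsh t₂ k).1
  have hx1s : (F t₁).1 < (F (t₂ + k * τ)).1 := by rw [hsx]; exact hk
  have hsxc : (F (t₂ + k * τ)).1 < (F t₁).1 + (f τ).1 := by
    rw [hsx]
    have : (F t₂).1 + (k:ℝ) * (f τ).1 = ((F t₂).1 + ((k:ℝ) - 1) * (f τ).1) + (f τ).1 := by ring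
    rw [this]
    linarith
  have hst : t₁ + τ < t₂ + k * τ := by
    have h1 : (1:ℝ) ≤ (k:ℝ) := by exact_mod_cast hk1
    nlinarith
  -- the polygon and its vertices
  have hA : F t₁ = ((F t₁).1, 0) := Prod.ext rfl hz1
  have hB : F (t₁ + τ) = ((F t₁).1 + (f τ).1, 0) := by
    rw [hshift hτ hF hf0 t₁, hvc]
    apply Prod.ext
    · rw [Prod.fst_add]
    · rw [Prod.snd_add, hz1]; simp
  haveI : NeZero (2 * m + 3) := ⟨by omega⟩
  set VV : Fin (2 * m + 3) → ℝ × ℝ :=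
    fun j => VnP F τ t₁ t (F t₁).1 (f τ).1 j.val with hVVdef
  have hVval : ∀ j : Fin (2 * m + 3), VV j = VnP F τ t₁ t (F t₁).1 (f τ).1 j.val :=
    fun j => rfl
  have hsuccv : ∀ j : Fin (2 * m + 3), (j : ℕ) < 2 * m + 2 →
      ((j + 1 : Fin (2 * m + 3)) : ℕ) = (j : ℕ) + 1 := by
    intro j hj
    apply Fin.val_add_one_of_lt
    rw [Fin.lt_def]
    simpa using (by omega : (j : ℕ) < 2 * m + 2)
  have hwrap : ∀ j : Fin (2 * m + 3), (j : ℕ) = 2 * m + 2 → j + 1 = 0 := by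
    intro j hj
    have : j = Fin.last (2 * m + 2) := Fin.ext (by simpa using hj)
    rw [this, Fin.last_add_one]
  have hVn0 : VnP F τ t₁ t (F t₁).1 (f τ).1 0 = ((F t₁).1, 0) := by
    rw [VnP, if_pos (by omega), vtP_zero (τ := τ) (t₁ := t₁) hτ h0, ← hA]
  have hVn2m : VnP F τ t₁ t (F t₁).1 (f τ).1 (2 * m) = ((F t₁).1 + (f τ).1, 0) := by
    rw [VnP, if_pos (le_refl _), vtP_top (τ := τ) (t₁ := t₁) hτ hm hlast, hB]
  have hVnB' : VnP F τ t₁ t (F t₁).1 (f τ).1 (2 * m + 1)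
      = ((F t₁).1 + (f τ).1 + 1, -1) := by
    rw [VnP, if_neg (by omega), if_pos rfl]
  have hVnA' : VnP F τ t₁ t (F t₁).1 (f τ).1 (2 * m + 2) = ((F t₁).1 - 1, -1) := by
    rw [VnP, if_neg (by omega), if_neg (by omega)]
  -- choice of the generic shear δ
  have hδchoice : ∃ δ : ℝ, 0 < δ ∧ δ < 1 ∧ ∀ j : Fin (2 * m + 3),
      (VV (j + 1)).2 - (VV j).2 ≠ 0 →
      δ ≠ ((VV j).1 - (VV (j + 1)).1) / ((VV (j + 1)).2 - (VV j).2) := by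
    obtain ⟨δ, hδ⟩ := ((Set.Ioo_infinite (zero_lt_one (α := ℝ))).diff
      (Set.finite_range (fun j : Fin (2 * m + 3) =>
        ((VV j).1 - (VV (j + 1)).1) / ((VV (j + 1)).2 - (VV j).2)))).nonempty
    refine ⟨δ, hδ.1.1, hδ.1.2, ?_⟩
    intro j _ heq
    exact hδ.2 ⟨j, heq.symm⟩
  obtain ⟨δ, hδ0, hδ1, hδbad⟩ := hδchoice
  have hgen : ∀ j : Fin (2 * m + 3), xi δ (VV j) = xi δ (VV (j + 1)) →
      VV j = VV (j + 1) := by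
    intro j heq
    have heq' : (VV j).1 + δ * (VV j).2 = (VV (j + 1)).1 + δ * (VV (j + 1)).2 := heq
    by_cases h2 : (VV (j + 1)).2 - (VV j).2 = 0
    · have hy2 : (VV j).2 = (VV (j + 1)).2 := by linarith
      have hx2 : (VV j).1 = (VV (j + 1)).1 := by
        rw [hy2] at heq'
        linarith
      exact Prod.ext hx2 hy2
    · exfalso
      apply hδbad j h2
      rw [eq_div_iff h2]
      linarith [heq']
  have hFcont : Continuous F := contF hτ hf hF hf0
  obtain ⟨M, hM⟩ := (isCompact_Icc (a := t₁) (b := t₁ + τ)).exists_bound_of_continuousOn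
    hFcont.continuousOn
  have hM0 : 0 ≤ M := le_trans (norm_nonneg (F t₁)) (hM t₁ ⟨le_refl _, by linarith⟩)
  have hcoord : ∀ w ∈ Set.Icc t₁ (t₁ + τ), (F w).1 ≤ M ∧ (F w).2 ≤ M := by
    intro w hw
    have h1 : ‖(F w).1‖ ≤ ‖F w‖ := norm_fst_le (F w)
    have h2 : ‖(F w).2‖ ≤ ‖F w‖ := norm_snd_le (F w)
    rw [Real.norm_eq_abs] at h1 h2
    exact ⟨le_trans (le_trans (le_abs_self _) h1) (hM w hw),
      le_trans (le_trans (le_abs_self _) h2) (hM w hw)⟩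
  have hx1M : (F t₁).1 ≤ M := (hcoord t₁ ⟨le_refl _, by linarith⟩).1
  have hxibnd : ∀ j : Fin (2 * m + 3), xi δ (VV j) ≤ 2 * M + (f τ).1 + 2 := by
    intro j
    by_cases hj : (j : ℕ) ≤ 2 * m
    · have he : VV j = F (vtP τ t₁ t j.val) := by rw [hVval, VnP, if_pos hj]
      rw [he, xi]
      have hmem := vtP_mem (τ := τ) (t₁ := t₁) (t := t) hτ (j : ℕ)
      have h1 := (hcoord _ hmem).1
      have h2 := (hcoord _ hmem).2
      have h3 := hy (vtP τ t₁ t (j : ℕ))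
      nlinarith
    · have hj2 : (j : ℕ) = 2 * m + 1 ∨ (j : ℕ) = 2 * m + 2 := by omega
      rcases hj2 with h | h
      · have he : VV j = ((F t₁).1 + (f τ).1 + 1, -1) := by rw [hVval, h, hVnB']
        rw [he, xi]
        show (F t₁).1 + (f τ).1 + 1 + δ * (-1) ≤ _
        nlinarith
      · have he : VV j = ((F t₁).1 - 1, -1) := by rw [hVval, h, hVnA']
        rw [he, xi]
        show (F t₁).1 - 1 + δ * (-1) ≤ _
        nlinarith
  -- far point
  obtain ⟨n, hn⟩ := exists_nat_gt
    (max ((2 * M + (f τ).1 + 2 - (F t₁).1) / (f τ).1) ((t₂ + k * τ - t₁) / τ))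
  have hn1 : (2 * M + (f τ).1 + 2 - (F t₁).1) / (f τ).1 < n :=
    lt_of_le_of_lt (le_max_left _ _) hn
  have hn2 : (t₂ + k * τ - t₁) / τ < n := lt_of_le_of_lt (le_max_right _ _) hn
  have hs' : t₂ + k * τ < t₁ + n * τ := by
    rw [div_lt_iff₀ hτ] at hn2; linarith
  have hfar : 2 * M + (f τ).1 + 2 < (F t₁).1 + n * (f τ).1 := by
    rw [div_lt_iff₀ hc] at hn1; linarith
  have hFs'c := hxsh t₁ n
  have hW2 : W δ VV (F (t₁ + n * τ)) = 0 := by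
    apply Finset.sum_eq_zero
    intro j _
    rw [cI, if_neg]
    apply notCross_far
    · have h2 : xi δ (F (t₁ + n * τ)) = (F t₁).1 + n * (f τ).1 := by
        rw [xi, hFs'c.1, hFs'c.2, hz1, mul_zero, add_zero]
      rw [h2]
      linarith [hxibnd j]
    · have h2 : xi δ (F (t₁ + n * τ)) = (F t₁).1 + n * (f τ).1 := by
        rw [xi, hFs'c.1, hFs'c.2, hz1, mul_zero, add_zero]
      rw [h2]
      linarith [hxibnd (j + 1)]
  -- coordinates of F at the distinguished zero
  have hFs : F (t₂ + k * τ) = ((F t₂).1 + k * (f τ).1, 0) := Prod.ext hsx hs2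
  have hxis : xi δ (F (t₂ + k * τ)) = (F t₂).1 + k * (f τ).1 := by
    rw [xi, hsx, hs2, mul_zero, add_zero]
  have hxiB : xi δ (((F t₁).1 + (f τ).1, 0) : ℝ × ℝ) = (F t₁).1 + (f τ).1 := by
    simp [xi]
  have hxiB' : xi δ (((F t₁).1 + (f τ).1 + 1, -1) : ℝ × ℝ)
      = (F t₁).1 + (f τ).1 + 1 - δ := by simp [xi]; ring
  have hxiA' : xi δ (((F t₁).1 - 1, -1) : ℝ × ℝ) = (F t₁).1 - 1 - δ := by
    simp [xi]; ring
  have hxiA : xi δ (((F t₁).1, 0) : ℝ × ℝ) = (F t₁).1 := by simp [xi]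
  -- the path after time s avoids the polygon
  have hnotin : ∀ u ∈ Set.Icc (t₂ + k * τ) (t₁ + n * τ), ∀ j : Fin (2 * m + 3),
      F u ∉ segment ℝ (VV j) (VV (j + 1)) := by
    intro u hu j hseg
    have hu1 : t₁ + τ < u := lt_of_lt_of_le hst hu.1
    by_cases hj : (j : ℕ) < 2 * m
    · have e2 : VV (j + 1) = VnP F τ t₁ t (F t₁).1 (f τ).1 ((j : ℕ) + 1) := by
        rw [hVval, hsuccv j (by omega)]
      rw [hVval j, e2] at hseg
      obtain ⟨w, hw, hFw⟩ := harc hτ hm hmono h0 hlast hlin hF hf0 (j : ℕ) hj _ hseg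
      have huw : u = w := hinj hFw.symm
      rw [huw] at hu1
      linarith [hw.2]
    · have hj3 : (j : ℕ) = 2 * m ∨ (j : ℕ) = 2 * m + 1 ∨ (j : ℕ) = 2 * m + 2 := by
        have := j.isLt; omega
      rcases hj3 with h | h | h
      · have e1 : VV j = ((F t₁).1 + (f τ).1, 0) := by rw [hVval, h, hVn2m]
        have e2 : VV (j + 1) = ((F t₁).1 + (f τ).1 + 1, -1) := by
          rw [hVval, hsuccv j (by omega), h, hVnB']
        rw [e1, e2] at hseg
        obtain ⟨μ, hμ0, hμ1, hzx, hzy⟩ := seg_coords hseg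
        have hyu := hy u
        have hμ : μ = 0 := by
          rw [hzy] at hyu
          ring_nf at hyu
          linarith
        have hFu : F u = F (t₁ + τ) := by
          rw [hB]
          apply Prod.ext
          · rw [hzx, hμ]; ring
          · rw [hzy, hμ]; ring
        have := hinj hFu
        rw [this] at hu1
        linarith
      · have e1 : VV j = ((F t₁).1 + (f τ).1 + 1, -1) := by rw [hVval, h, hVnB']
        have e2 : VV (j + 1) = ((F t₁).1 - 1, -1) := by
          rw [hVval, hsuccv j (by omega), h, hVnA']
        rw [e1, e2] at hseg
        obtain ⟨μ, hμ0, hμ1, hzx, hzy⟩ := seg_coords hseg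
        have hyu := hy u
        rw [hzy] at hyu
        ring_nf at hyu
        linarith
      · have e1 : VV j = ((F t₁).1 - 1, -1) := by rw [hVval, h, hVnA']
        have e2 : VV (j + 1) = ((F t₁).1, 0) := by
          rw [hwrap j h, hVval]
          have e0 : ((0 : Fin (2 * m + 3)) : ℕ) = 0 := by simp
          rw [e0, hVn0]
        rw [e1, e2] at hseg
        obtain ⟨μ, hμ0, hμ1, hzx, hzy⟩ := seg_coords hseg
        have hyu := hy u
        have hμ : μ = 1 := by
          rw [hzy] at hyu
          ring_nf at hyu
          linarith
        have hFu : F u = F t₁ := by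
          rw [hA]
          apply Prod.ext
          · rw [hzx, hμ]; ring
          · rw [hzy, hμ]; ring
        have := hinj hFu
        rw [this] at hu1
        linarith
  -- the winding parity at the distinguished zero is 1
  have hW1 : W δ VV (F (t₂ + k * τ)) = 1 := by
    have hj0lt : 2 * m + 1 < 2 * m + 3 := by omega
    have h0term : ∀ j ∈ Finset.univ, j ≠ (⟨2 * m + 1, hj0lt⟩ : Fin (2 * m + 3)) →
        cI δ (F (t₂ + k * τ)) (VV j) (VV (j + 1)) = 0 := by
      intro j _ hne
      rw [cI, if_neg]
      intro hcross
      by_cases hj : (j : ℕ) < 2 * m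
      · obtain ⟨z, hzseg, hzlt, _⟩ := crossBelow hcross
        have e2 : VV (j + 1) = VnP F τ t₁ t (F t₁).1 (f τ).1 ((j : ℕ) + 1) := by
          rw [hVval, hsuccv j (by omega)]
        rw [hVval j, e2] at hzseg
        obtain ⟨w, hw, hFw⟩ := harc hτ hm hmono h0 hlast hlin hF hf0 (j : ℕ) hj _ hzseg
        have h1 := hy w
        rw [hFw] at h1
        rw [hs2] at hzlt
        linarith
      · have hj3 : (j : ℕ) = 2 * m ∨ (j : ℕ) = 2 * m + 2 := by
          have := j.isLt
          have hvne : (j : ℕ) ≠ 2 * m + 1 := fun hcon2 => hne (Fin.ext hcon2)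
          omega
        rcases hj3 with h | h
        · have e1 : VV j = ((F t₁).1 + (f τ).1, 0) := by rw [hVval, h, hVn2m]
          have e2 : VV (j + 1) = ((F t₁).1 + (f τ).1 + 1, -1) := by
            rw [hVval, hsuccv j (by omega), h, hVnB']
          rw [e1, e2] at hcross
          rcases hcross with ⟨h1, _, _⟩ | ⟨h1, _, _⟩
          · rw [hxiB, hxis] at h1
            linarith [hsxc, hsx]
          · rw [hxiB', hxis] at h1
            have := hsxc
            rw [hsx] at this
            linarith
        · have e1 : VV j = ((F t₁).1 - 1, -1) := by rw [hVval, h, hVnA']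
          have e2 : VV (j + 1) = ((F t₁).1, 0) := by
            rw [hwrap j h, hVval]
            have e0 : ((0 : Fin (2 * m + 3)) : ℕ) = 0 := by simp
            rw [e0, hVn0]
          rw [e1, e2] at hcross
          have hgt := hx1s
          rw [hsx] at hgt
          rcases hcross with ⟨_, h1, _⟩ | ⟨_, h1, _⟩
          · rw [hxiA, hxis] at h1
            linarith
          · rw [hxiA', hxis] at h1
            linarith
    have h1term : (⟨2 * m + 1, hj0lt⟩ : Fin (2 * m + 3)) ∉ Finset.univ →
        cI δ (F (t₂ + k * τ)) (VV (⟨2 * m + 1, hj0lt⟩ : Fin (2 * m + 3)))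
          (VV ((⟨2 * m + 1, hj0lt⟩ : Fin (2 * m + 3)) + 1)) = 0 :=
      fun hmem => absurd (Finset.mem_univ _) hmem
    have hsum : W δ VV (F (t₂ + k * τ)) = cI δ (F (t₂ + k * τ))
        (VV (⟨2 * m + 1, hj0lt⟩ : Fin (2 * m + 3)))
        (VV ((⟨2 * m + 1, hj0lt⟩ : Fin (2 * m + 3)) + 1)) :=
      Finset.sum_eq_single _ h0term h1term
    rw [hsum]
    have e1 : VV (⟨2 * m + 1, hj0lt⟩ : Fin (2 * m + 3)) = ((F t₁).1 + (f τ).1 + 1, -1) := by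
      rw [hVval, hVnB']
    have e2 : VV ((⟨2 * m + 1, hj0lt⟩ : Fin (2 * m + 3)) + 1) = ((F t₁).1 - 1, -1) := by
      rw [hVval, hsuccv _ (by simp), hVnA']
    rw [e1, e2, cI, if_pos]
    right
    refine ⟨?_, ?_, ?_⟩
    · rw [hxiA', hxis]
      linarith [hx1s, hsx]
    · rw [hxiB', hxis]
      have h2 := hsxc
      rw [hsx] at h2
      linarith
    · rw [hFs]
      show dt _ _ < 0
      simp only [dt, Prod.fst_sub, Prod.snd_sub]
      ring_nf
      nlinarith [hc]
  -- transport the parity along the curve : contradiction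
  have hconst := W_const_path δ VV F (le_of_lt hs') hFcont.continuousOn
    (fun u hu => W_locConst δ VV (F u) hgen (hnotin u hu))
  rw [hW1, hW2] at hconst
  exact absurd hconst (by decide)
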